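/- If (X, X₀) is a 2-contact space and X₀ is extremally disconnected, then X is C-semiregular. -/

import Mathlib

open TopologicalSpace

/-- A set is regular closed if it equals the closure of its interior. -/
def IsRC {X : Type*} [TopologicalSpace X] (F : Set X) : Prop :=
  F = closure (interior F)

/-- The relation `C#` associated to a precontact relation `C`. -/
def CSharp {B : Type*} [BooleanAlgebra B] (C : B → B → Prop) (a b : B) : Prop :=
  C a b ∨ C b a ∨ a ⊓ b ≠ ⊥

/-- A clan of a precontact algebra `(B,C)`. -/
def IsClan {B : Type*} [BooleanAlgebra B] (C : B → B → Prop) (Γ : Set B) : Prop :=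
  Γ.Nonempty ∧ ⊥ ∉ Γ ∧ (∀ a ∈ Γ, ∀ b : B, a ≤ b → b ∈ Γ) ∧
    (∀ a b : B, a ⊔ b ∈ Γ → a ∈ Γ ∨ b ∈ Γ) ∧
    (∀ a ∈ Γ, ∀ b ∈ Γ, CSharp C a b)

/-- For a clopen subset `A` of the subspace `X₀`, its closure `cl_X A` in the ambient space. -/
def embCl {X : Type*} [TopologicalSpace X] (X₀ : Set X) (A : Clopens ↥X₀) : Set X :=
  closure (Subtype.val '' (A : Set ↥X₀))

/-- A 2-contact space `(X, X₀)`. -/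
structure TwoContact (X : Type*) [TopologicalSpace X] (X₀ : Set X) : Prop where
  /-- `X₀` is dense in `X` -/
  dense : Dense X₀
  /-- (CS1): `X` is a `T₀`-space -/
  t0 : T0Space X
  /-- (CS2): `X₀` is compact -/
  compact₀ : CompactSpace ↥X₀
  /-- (CS2): `X₀` is Hausdorff -/
  t2₀ : T2Space ↥X₀
  /-- (CS2): `X₀` is zero-dimensional -/
  zdim₀ : IsTopologicalBasis {s : Set ↥X₀ | IsClopen s}
  /-- (CS3): `RC(X,X₀)` is a closed base for `X` -/
  base : ∀ U : Set X, IsOpen U → ∀ x ∈ U,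
    ∃ A : Clopens ↥X₀, x ∈ (embCl X₀ A)ᶜ ∧ (embCl X₀ A)ᶜ ⊆ U
  /-- (CS4): every clan of `(CO(X₀), δ_(X,X₀))` is of the form `Γ_{x,X₀}` -/
  cs4 : ∀ Γ : Set (Clopens ↥X₀),
    IsClan (fun A B : Clopens ↥X₀ => (embCl X₀ A ∩ embCl X₀ B).Nonempty) Γ →
    ∃ x : X, Γ = {A : Clopens ↥X₀ | x ∈ embCl X₀ A}

/-- A clan of the standard contact algebra `(RC(X), C_X)`. -/
def IsClanRC {X : Type*} [TopologicalSpace X] (Γ : Set (Set X)) : Prop :=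
  (∀ F ∈ Γ, IsRC F) ∧ Γ.Nonempty ∧ ∅ ∉ Γ ∧
    (∀ F ∈ Γ, ∀ G : Set X, IsRC G → F ⊆ G → G ∈ Γ) ∧
    (∀ F G : Set X, IsRC F → IsRC G → F ∪ G ∈ Γ → F ∈ Γ ∨ G ∈ Γ) ∧
    (∀ F ∈ Γ, ∀ G ∈ Γ, (F ∩ G).Nonempty)

/-- A space is semiregular if its regular closed sets form a closed base. -/
def Semiregular (X : Type*) [TopologicalSpace X] : Prop :=
  ∀ U : Set X, IsOpen U → ∀ x ∈ U, ∃ F : Set X, IsRC F ∧ x ∉ F ∧ Fᶜ ⊆ U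

/-- A C-semiregular space. -/
def CSemiregular (X : Type*) [TopologicalSpace X] : Prop :=
  Semiregular X ∧ T0Space X ∧
    ∀ Γ : Set (Set X), IsClanRC Γ → ∃ x : X, Γ = {F : Set X | IsRC F ∧ x ∈ F}

/-- An u-point of a topological space. -/
def IsUPoint {X : Type*} [TopologicalSpace X] (x : X) : Prop :=
  ∀ U V : Set X, IsOpen U → IsOpen V →
    x ∈ closure U ∩ closure V → x ∈ closure (U ∩ V)



section Aux
variable {X : Type*} [TopologicalSpace X] {X₀ : Set X}

lemma closure_open_isRC {U : Set X} (hU : IsOpen U) : IsRC (closure U) := by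
  apply subset_antisymm
  · exact closure_mono (hU.subset_interior_iff.mpr subset_closure)
  · calc closure (interior (closure U)) ⊆ closure (closure U) := closure_mono interior_subset
      _ = closure U := closure_closure

lemma dense_closure_inter (hd : Dense X₀) {U : Set X} (hU : IsOpen U) :
    closure (U ∩ X₀) = closure U := by
  apply subset_antisymm (closure_mono Set.inter_subset_left)
  have h := hd.open_subset_closure_inter hU
  calc closure U ⊆ closure (closure (U ∩ X₀)) := closure_mono h
    _ = closure (U ∩ X₀) := closure_closure

lemma embCl_eq (hd : Dense X₀) (A : Clopens ↥X₀) :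
    ∃ U : Set X, IsOpen U ∧ embCl X₀ A = closure U := by
  obtain ⟨U, hU, hAU⟩ := isOpen_induced_iff.mp A.isClopen.2
  refine ⟨U, hU, ?_⟩
  have himg : Subtype.val '' (A : Set ↥X₀) = X₀ ∩ U := by
    rw [show (A : Set ↥X₀) = Subtype.val ⁻¹' U from hAU.symm, Subtype.image_preimage_coe]
  rw [embCl, himg, Set.inter_comm, dense_closure_inter hd hU]

lemma embCl_isRC (hd : Dense X₀) (A : Clopens ↥X₀) : IsRC (embCl X₀ A) := by
  obtain ⟨U, hU, hEq⟩ := embCl_eq hd A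
  rw [hEq]; exact closure_open_isRC hU

lemma embCl_sup (A B : Clopens ↥X₀) :
    embCl X₀ (A ⊔ B) = embCl X₀ A ∪ embCl X₀ B := by
  simp only [embCl, Clopens.coe_sup, Set.image_union, closure_union]

lemma embCl_bot : embCl X₀ (⊥ : Clopens ↥X₀) = ∅ := by
  simp [embCl]

lemma embCl_mono {A B : Clopens ↥X₀} (hAB : A ≤ B) : embCl X₀ A ⊆ embCl X₀ B :=
  closure_mono (Set.image_mono hAB)

lemma embCl_surj (hd : Dense X₀) (hed : ExtremallyDisconnected ↥X₀)
    {F : Set X} (hF : IsRC F) : ∃ A : Clopens ↥X₀, embCl X₀ A = F := by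
  set S : Set ↥X₀ := Subtype.val ⁻¹' (interior F) with hS
  have hSopen : IsOpen S := isOpen_interior.preimage continuous_subtype_val
  refine ⟨⟨closure S, isClosed_closure, hed.open_closure S hSopen⟩, ?_⟩
  have h1 : embCl X₀ ⟨closure S, isClosed_closure, hed.open_closure S hSopen⟩
      = closure (Subtype.val '' S) := by
    apply subset_antisymm
    · apply closure_minimal _ isClosed_closure
      exact image_closure_subset_closure_image continuous_subtype_val
    · exact closure_mono (Set.image_mono subset_closure)
  have h2 : Subtype.val '' S = X₀ ∩ interior F := Subtype.image_preimage_coe _ _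
  rw [h1, h2, Set.inter_comm, dense_closure_inter hd isOpen_interior, ← hF]

end Aux

theorem stmt13 {X : Type*} [TopologicalSpace X] {X₀ : Set X}
    (h : TwoContact X X₀) (hed : ExtremallyDisconnected ↥X₀) :
    CSemiregular X := by
  obtain ⟨hd, ht0, _, _, _, hbase, hcs4⟩ := h
  have hsemi : Semiregular X := by
    intro U hU x hx
    obtain ⟨A, hxA, hAU⟩ := hbase U hU x hx
    exact ⟨embCl X₀ A, embCl_isRC hd A, hxA, hAU⟩
  refine ⟨hsemi, ht0, ?_⟩
  intro Γ hΓ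
  obtain ⟨hRC, hne, hbot, hup, hsplit, hint⟩ := hΓ
  set Γ₀ : Set (Clopens ↥X₀) := {A | embCl X₀ A ∈ Γ} with hΓ₀
  have hclan : IsClan (fun A B : Clopens ↥X₀ => (embCl X₀ A ∩ embCl X₀ B).Nonempty) Γ₀ := by
    refine ⟨?_, ?_, ?_, ?_, ?_⟩
    · obtain ⟨F, hF⟩ := hne
      obtain ⟨A, hA⟩ := embCl_surj hd hed (hRC F hF)
      exact ⟨A, by simpa [hΓ₀, hA] using hF⟩
    · simpa [hΓ₀, embCl_bot] using hbot
    · intro A hA B hAB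
      exact hup _ hA _ (embCl_isRC hd B) (embCl_mono hAB)
    · intro A B hAB
      have := hsplit (embCl X₀ A) (embCl X₀ B) (embCl_isRC hd A) (embCl_isRC hd B)
        (by rwa [← embCl_sup])
      exact this
    · intro A hA B hB
      exact Or.inl (hint _ hA _ hB)
  obtain ⟨x, hx⟩ := hcs4 Γ₀ hclan
  refine ⟨x, Set.ext fun F => ?_⟩
  constructor
  · intro hF
    have hFRC := hRC F hF
    obtain ⟨A, hA⟩ := embCl_surj hd hed hFRC
    have : A ∈ Γ₀ := by simp [hΓ₀, hA, hF]
    rw [hx] at this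
    exact ⟨hFRC, hA ▸ this⟩
  · rintro ⟨hFRC, hxF⟩
    obtain ⟨A, hA⟩ := embCl_surj hd hed hFRC
    have : A ∈ Γ₀ := by rw [hx]; simpa [hA] using hxF
    simpa [hΓ₀, hA] using this
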